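/- Any matching μ induced by an optimal solution of the integer program IP-RV with γ = α·z* is a feasible matching, is an α-approximation of the government-optimal matching, and maximizes the rank-value welfare Σ_{i∈F} v(≽_{i,μ(i)}) among all feasible matchings μ' with z(μ') ≥ α·z*. -/

import Mathlib

/-- A matching is feasible if each location `j` hosts exactly `q j` families. -/
def feasible {F L : Type} [Fintype F] [DecidableEq L] (q : L → ℕ) (μ : F → L) : Prop :=
  ∀ j : L, (Finset.univ.filter (fun i => μ i = j)).card = q j

/-- The government objective: expected number of successfully integrated families. -/
def z {F L : Type} [Fintype F] (π : F → L → ℝ) (μ : F → L) : ℝ :=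
  ∑ i, π i (μ i)

/-- Rank of location `j` in the preference list of family `i` (1-based). -/
def rankOf {F L : Type} [DecidableEq L] (prefs : F → List L) (i : F) (j : L) : ℕ :=
  (prefs i).idxOf j + 1

/-- Rank-value welfare of a matching. -/
def welfare {F L : Type} [Fintype F] [DecidableEq L] (v : ℕ → ℝ) (prefs : F → List L)
    (μ : F → L) : ℝ :=
  ∑ i, v (rankOf prefs i (μ i))

lemma sum_indicator_mul {F L : Type} [Fintype F] [Fintype L] [DecidableEq L]
    (f : F → L → ℝ) (ν : F → L) :
    ∑ i, ∑ j, f i j * ((if ν i = j then 1 else 0 : ℕ) : ℝ) = ∑ i, f i (ν i) := by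
  refine Finset.sum_congr rfl fun i _ => ?_
  simp [mul_comm, Finset.sum_ite_eq]

/-- Any matching induced by an optimal solution of IP-RV with `γ = α * z*` is
feasible, is an `α`-approximation of the government-optimal matching, and maximizes the
rank-value welfare among all feasible matchings achieving at least `α * z*`. -/
theorem iprv_optimal_solution_properties
    {F L : Type} [Fintype F] [Fintype L] [DecidableEq L]
    (q : L → ℕ) (π : F → L → ℝ) (prefs : F → List L) (α zs : ℝ) (v : ℕ → ℝ)
    (hq : ∑ j, q j = Fintype.card F)
    (hπ : ∀ i j, π i j ∈ Set.Icc (0 : ℝ) 1)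
    (hα : α ∈ Set.Icc (0 : ℝ) 1)
    (hv : ∀ k k' : ℕ, k ≤ k' → v k' ≤ v k)
    (hzs : IsGreatest {x : ℝ | ∃ μ : F → L, feasible q μ ∧ x = z π μ} zs)
    (hprefs : ∀ i, (prefs i).Nodup ∧ ∀ j : L, j ∈ prefs i)
    -- an optimal solution x of IP-RV:
    (x : F → L → ℕ)
    (hx01 : ∀ i j, x i j = 0 ∨ x i j = 1)
    (hxcap : ∀ j : L, ∑ i, x i j = q j)
    (hxone : ∀ i : F, ∑ j, x i j = 1)
    (hxγ : α * zs ≤ ∑ i, ∑ j, π i j * (x i j : ℝ))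
    (hxopt : ∀ x' : F → L → ℕ, (∀ i j, x' i j = 0 ∨ x' i j = 1) →
      (∀ j : L, ∑ i, x' i j = q j) → (∀ i : F, ∑ j, x' i j = 1) →
      α * zs ≤ ∑ i, ∑ j, π i j * (x' i j : ℝ) →
      ∑ i, ∑ j, v (rankOf prefs i j) * (x' i j : ℝ) ≤
        ∑ i, ∑ j, v (rankOf prefs i j) * (x i j : ℝ))
    -- the induced matching:
    (μ : F → L) (hμ : ∀ i, x i (μ i) = 1) :
    feasible q μ ∧ α * zs ≤ z π μ ∧
      ∀ μ' : F → L, feasible q μ' → α * zs ≤ z π μ' →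
        welfare v prefs μ' ≤ welfare v prefs μ := by
  -- x is the indicator of μ
  have hxij : ∀ i j, x i j = if μ i = j then 1 else 0 := by
    intro i j
    by_cases h : μ i = j
    · simp [← h, hμ i]
    · simp only [h, if_false]
      have h1 := hxone i
      rw [← Finset.add_sum_erase _ _ (Finset.mem_univ (μ i)), hμ i] at h1
      have h2 : ∑ k ∈ Finset.univ.erase (μ i), x i k = 0 := by omega
      have := (Finset.sum_eq_zero_iff.mp h2) j
        (Finset.mem_erase.mpr ⟨fun hh => h hh.symm, Finset.mem_univ j⟩)
      exact this
  have hfeas : feasible q μ := by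
    intro j
    rw [← hxcap j, Finset.card_filter]
    refine Finset.sum_congr rfl fun i _ => (hxij i j).symm
  have hzμ : (∑ i, ∑ j, π i j * (x i j : ℝ)) = z π μ := by
    simp only [hxij]
    exact sum_indicator_mul π μ
  refine ⟨hfeas, by rw [← hzμ]; exact hxγ, ?_⟩
  intro μ' hfeas' hz'
  set x' : F → L → ℕ := fun i j => if μ' i = j then 1 else 0 with hx'
  have h01 : ∀ i j, x' i j = 0 ∨ x' i j = 1 := by
    intro i j; by_cases h : μ' i = j <;> simp [hx', h]
  have hcap : ∀ j, ∑ i, x' i j = q j := by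
    intro j
    rw [← hfeas' j, Finset.card_filter]
  have hone : ∀ i, ∑ j, x' i j = 1 := by
    intro i; simp [hx', Finset.sum_ite_eq]
  have hγ' : α * zs ≤ ∑ i, ∑ j, π i j * (x' i j : ℝ) := by
    rw [show (∑ i, ∑ j, π i j * (x' i j : ℝ)) = z π μ' from sum_indicator_mul π μ']
    exact hz'
  have h := hxopt x' h01 hcap hone hγ'
  have hw' : (∑ i, ∑ j, v (rankOf prefs i j) * (x' i j : ℝ)) = welfare v prefs μ' :=
    sum_indicator_mul (fun i j => v (rankOf prefs i j)) μ'
  have hw : (∑ i, ∑ j, v (rankOf prefs i j) * (x i j : ℝ)) = welfare v prefs μ := by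
    simp only [hxij]
    exact sum_indicator_mul (fun i j => v (rankOf prefs i j)) μ
  rwa [hw', hw] at h
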